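/- Define v₁ = (−3,3), v₂ = (−2,1), v₃ = (−2,−1), v₄ = (−3,−3) in ℝ². For k ∈ ℕ with k ≥ 1, a real τ, and a, b ∈ {1, …, k}, set p_AB(a,b) = v₁ + ((a−1)/k + b/(τk²))·(v₂ − v₁) and p_BA(b,a) = v₃ + ((b−1)/k + a/(τk²))·(v₄ − v₃), and let t_AB(a,b) be the closed segment from p_AB(a,b) to p_BA(b,a); let t_CD(c,d) = −t_AB(c,d) = { −z : z ∈ t_AB(c,d) } be the reflection through the origin. Then there exists τ₀ ≥ 2 such that for every τ ≥ τ₀, every k ≥ 1, and every (a,d) ∈ {1,…,k}², there exists a closed line segment h ⊆ ℝ² satisfying: for all ã, b ∈ {1,…,k}, h ∩ t_AB(ã,b) ≠ ∅ if and only if ã = a; and for all c, d̃ ∈ {1,…,k}, h ∩ t_CD(c,d̃) ≠ ∅ if and only if d̃ = d. -/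

import Mathlib

set_option maxHeartbeats 1000000 in
private lemma gQ_bound (A D K t : ℝ) (hA0 : 0 ≤ A) (hA1 : A ≤ 1) (hD0 : 0 ≤ D) (hD1 : D ≤ 1)
    (ht0 : 0 ≤ t) (ht1 : t ≤ 1) (hK0 : 0 ≤ K) (hK1 : K ≤ 1/100) :
    (5+D-A-2*K)*(2*A+4*K-4-2*t) - (-2+2*D+2*A+4*K)*(1-t-A-2*K) ≤ -7 := by
  nlinarith [mul_nonneg hA0 hD0, mul_nonneg hA0 ht0, mul_nonneg hD0 ht0,
    mul_nonneg (sub_nonneg.2 hA1) (sub_nonneg.2 hD1),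
    mul_nonneg (sub_nonneg.2 hA1) (sub_nonneg.2 ht1),
    mul_nonneg (sub_nonneg.2 hD1) (sub_nonneg.2 ht1),
    mul_nonneg hA0 (sub_nonneg.2 hD1), mul_nonneg hA0 (sub_nonneg.2 ht1),
    mul_nonneg hD0 (sub_nonneg.2 hA1), mul_nonneg hD0 (sub_nonneg.2 ht1),
    mul_nonneg ht0 (sub_nonneg.2 hA1), mul_nonneg ht0 (sub_nonneg.2 hD1)]

set_option maxHeartbeats 1000000 in
private lemma gB_bound (A D K S : ℝ) (hA0 : 0 ≤ A) (hA1 : A ≤ 1) (hD0 : 0 ≤ D) (hD1 : D ≤ 1)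
    (hS0 : 0 ≤ S) (hS1 : S ≤ 1) (hK0 : 0 ≤ K) (hK1 : K ≤ 1/100) :
    (5+D-A-2*K)*(2*S+2*A+4*K-6) - (-2+2*D+2*A+4*K)*(6-S-A-2*K) ≤ -7 := by
  nlinarith [mul_nonneg hA0 hD0, mul_nonneg hA0 hS0, mul_nonneg hD0 hS0,
    mul_nonneg (sub_nonneg.2 hA1) (sub_nonneg.2 hD1),
    mul_nonneg (sub_nonneg.2 hA1) (sub_nonneg.2 hS1),
    mul_nonneg (sub_nonneg.2 hD1) (sub_nonneg.2 hS1),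
    mul_nonneg hA0 (sub_nonneg.2 hD1), mul_nonneg hA0 (sub_nonneg.2 hS1),
    mul_nonneg hD0 (sub_nonneg.2 hA1), mul_nonneg hD0 (sub_nonneg.2 hS1),
    mul_nonneg hS0 (sub_nonneg.2 hA1), mul_nonneg hS0 (sub_nonneg.2 hD1)]

set_option maxHeartbeats 1000000 in
private lemma left_pos (A D K ρ s t : ℝ)
    (hA0 : 0 ≤ A) (hA1 : A ≤ 1) (hD0 : 0 ≤ D) (hD1 : D ≤ 1)
    (hK0 : 0 < K) (hK1 : K ≤ 1/100)
    (hρ2 : 2*K ≤ ρ) (hρ1 : ρ ≤ 1)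
    (hsl : A ≤ s) (hsu : s ≤ A + K) (hs1 : s ≤ 1) (hs0 : 0 ≤ s)
    (ht0 : 0 ≤ t) (ht1 : t ≤ 1) :
    ∃ u μ : ℝ, -ρ ≤ u ∧ u ≤ 1 + ρ ∧ 0 ≤ μ ∧ μ ≤ 1 ∧
      (-3 + A + 2*K) + u*(5+D-A-2*K) = (-3 + s) + μ*(1 - t - s) ∧
      (3 - 2*A - 4*K) + u*(-2+2*D+2*A+4*K) = (3 - 2*s) + μ*(-4 - 2*t + 2*s) := by
  have hρ0 : 0 < ρ := by linarith
  have hgQ := gQ_bound A D K t hA0 hA1 hD0 hD1 ht0 ht1 hK0.le hK1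
  have hgP0 : 0 ≤ (A+2*K-s)*(8+4*D) := by nlinarith
  have hgP24 : (A+2*K-s)*(8+4*D) ≤ 24*K := by nlinarith
  have hden : 0 < (A+2*K-s)*(8+4*D) -
      ((5+D-A-2*K)*(2*A+4*K-4-2*t) - (-2+2*D+2*A+4*K)*(1-t-A-2*K)) := by nlinarith
  obtain ⟨μ, hμdef⟩ : ∃ x : ℝ, x = (A+2*K-s)*(8+4*D) / ((A+2*K-s)*(8+4*D) -
      ((5+D-A-2*K)*(2*A+4*K-4-2*t) - (-2+2*D+2*A+4*K)*(1-t-A-2*K))) := ⟨_, rfl⟩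
  have hμ0 : 0 ≤ μ := hμdef ▸ div_nonneg hgP0 hden.le
  have hμ1 : μ ≤ 1 := by rw [hμdef, div_le_one hden]; linarith
  have hμK : μ ≤ 4*K := by rw [hμdef, div_le_iff₀ hden]; nlinarith
  have hg0 : (A+2*K-s)*(8+4*D) +
      μ * (((5+D-A-2*K)*(2*A+4*K-4-2*t) - (-2+2*D+2*A+4*K)*(1-t-A-2*K)) - (A+2*K-s)*(8+4*D)) = 0 := by
    rw [hμdef, div_mul_eq_mul_div, add_div' _ _ _ hden.ne', div_eq_zero_iff]; left; ring
  have hW : (0:ℝ) < 5+D-A-2*K := by nlinarith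
  have hW3 : (3:ℝ) ≤ 5+D-A-2*K := by nlinarith
  obtain ⟨u, hudef⟩ : ∃ x : ℝ, x = (s - A - 2*K + μ*(1 - t - s)) / (5+D-A-2*K) := ⟨_, rfl⟩
  have hnum1 : -(6*K) ≤ s - A - 2*K + μ*(1 - t - s) := by
    nlinarith [mul_nonneg hμ0 (by linarith : (0:ℝ) ≤ 2 - t - s)]
  have hnum2 : s - A - 2*K + μ*(1 - t - s) ≤ 3*K := by
    nlinarith [mul_nonneg hμ0 (by linarith : (0:ℝ) ≤ t + s)]
  have haux1 : 6*K ≤ ρ*(5+D-A-2*K) := by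
    nlinarith [mul_le_mul_of_nonneg_left hW3 hρ0.le]
  have haux2 : (5+D-A-2*K) ≤ (1+ρ)*(5+D-A-2*K) :=
    le_mul_of_one_le_left hW.le (by linarith)
  have hu1 : -ρ ≤ u := by rw [hudef, le_div_iff₀ hW]; linarith
  have hu2 : u ≤ 1 + ρ := by rw [hudef, div_le_iff₀ hW]; linarith
  have hx : u * (5+D-A-2*K) = s - A - 2*K + μ*(1 - t - s) := by
    rw [hudef]; field_simp
  refine ⟨u, μ, hu1, hu2, hμ0, hμ1, by linarith [hx], ?_⟩
  have hWne : (5+D-A-2*K) ≠ 0 := ne_of_gt hW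
  refine mul_left_cancel₀ hWne ?_
  linear_combination (-2+2*D+2*A+4*K) * hx - hg0

set_option maxHeartbeats 1000000 in
private lemma right_pos (A D K ρ S T : ℝ)
    (hA0 : 0 ≤ A) (hA1 : A ≤ 1) (hD0 : 0 ≤ D) (hD1 : D ≤ 1)
    (hK0 : 0 < K) (hK1 : K ≤ 1/100)
    (hρ2 : 2*K ≤ ρ) (hρ1 : ρ ≤ 1)
    (hTl : D ≤ T) (hTu : T ≤ D + K) (hT1 : T ≤ 1) (hT0 : 0 ≤ T)
    (hS0 : 0 ≤ S) (hS1 : S ≤ 1) :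
    ∃ u μ : ℝ, -ρ ≤ u ∧ u ≤ 1 + ρ ∧ 0 ≤ μ ∧ μ ≤ 1 ∧
      (-3 + A + 2*K) + u*(5+D-A-2*K) = (2 + T) + μ*(1 - S - T) ∧
      (3 - 2*A - 4*K) + u*(-2+2*D+2*A+4*K) = (1 + 2*T) + μ*(-4 + 2*S - 2*T) := by
  have hρ0 : 0 < ρ := by linarith
  have hgB := gB_bound A D K S hA0 hA1 hD0 hD1 hS0 hS1 hK0.le hK1
  have hgRid : (5+D-A-2*K)*(2*T-2+2*A+4*K) - (-2+2*D+2*A+4*K)*(5+T-A-2*K)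
      = (T-D)*(12-4*A-8*K) := by ring
  have hgR0 : 0 ≤ (5+D-A-2*K)*(2*T-2+2*A+4*K) - (-2+2*D+2*A+4*K)*(5+T-A-2*K) := by
    rw [hgRid]; nlinarith
  have hgR12 : (5+D-A-2*K)*(2*T-2+2*A+4*K) - (-2+2*D+2*A+4*K)*(5+T-A-2*K) ≤ 12*K := by
    rw [hgRid]; nlinarith
  have hden : 0 < ((5+D-A-2*K)*(2*T-2+2*A+4*K) - (-2+2*D+2*A+4*K)*(5+T-A-2*K)) -
      ((5+D-A-2*K)*(2*S+2*A+4*K-6) - (-2+2*D+2*A+4*K)*(6-S-A-2*K)) := by nlinarith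
  obtain ⟨μ, hμdef⟩ : ∃ x : ℝ, x = ((5+D-A-2*K)*(2*T-2+2*A+4*K) - (-2+2*D+2*A+4*K)*(5+T-A-2*K)) /
      (((5+D-A-2*K)*(2*T-2+2*A+4*K) - (-2+2*D+2*A+4*K)*(5+T-A-2*K)) -
      ((5+D-A-2*K)*(2*S+2*A+4*K-6) - (-2+2*D+2*A+4*K)*(6-S-A-2*K))) := ⟨_, rfl⟩
  have hμ0 : 0 ≤ μ := hμdef ▸ div_nonneg hgR0 hden.le
  have hμ1 : μ ≤ 1 := by rw [hμdef, div_le_one hden]; linarith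
  have hμK : μ ≤ 2*K := by rw [hμdef, div_le_iff₀ hden]; nlinarith
  have hg0 : ((5+D-A-2*K)*(2*T-2+2*A+4*K) - (-2+2*D+2*A+4*K)*(5+T-A-2*K)) +
      μ * (((5+D-A-2*K)*(2*S+2*A+4*K-6) - (-2+2*D+2*A+4*K)*(6-S-A-2*K)) -
        ((5+D-A-2*K)*(2*T-2+2*A+4*K) - (-2+2*D+2*A+4*K)*(5+T-A-2*K))) = 0 := by
    rw [hμdef, div_mul_eq_mul_div, add_div' _ _ _ hden.ne', div_eq_zero_iff]; left; ring
  have hW : (0:ℝ) < 5+D-A-2*K := by nlinarith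
  have hW3 : (3:ℝ) ≤ 5+D-A-2*K := by nlinarith
  obtain ⟨u, hudef⟩ : ∃ x : ℝ, x = (5 + T - A - 2*K + μ*(1 - S - T)) / (5+D-A-2*K) := ⟨_, rfl⟩
  have hnum1 : 5 + D - A - 2*K - 2*K ≤ 5 + T - A - 2*K + μ*(1 - S - T) := by
    nlinarith [mul_nonneg hμ0 (by linarith : (0:ℝ) ≤ 2 - S - T)]
  have hnum2 : 5 + T - A - 2*K + μ*(1 - S - T) ≤ (5 + D - A - 2*K) + 3*K := by
    nlinarith [mul_nonneg hμ0 (by linarith : (0:ℝ) ≤ S + T)]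
  have haux1 : 6*K ≤ ρ*(5+D-A-2*K) := by
    nlinarith [mul_le_mul_of_nonneg_left hW3 hρ0.le]
  have hu1 : -ρ ≤ u := by rw [hudef, le_div_iff₀ hW]; nlinarith
  have hu2 : u ≤ 1 + ρ := by rw [hudef, div_le_iff₀ hW]; nlinarith
  have hx : u * (5+D-A-2*K) = 5 + T - A - 2*K + μ*(1 - S - T) := by
    rw [hudef]; field_simp
  refine ⟨u, μ, hu1, hu2, hμ0, hμ1, by linarith [hx], ?_⟩
  have hWne : (5+D-A-2*K) ≠ 0 := ne_of_gt hW
  refine mul_left_cancel₀ hWne ?_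
  linear_combination (-2+2*D+2*A+4*K) * hx - hg0

set_option maxHeartbeats 1000000 in
private lemma left_neg (A D K ρ δ A' β t u μ : ℝ)
    (hA0 : 0 ≤ A) (hA1 : A ≤ 1) (hD0 : 0 ≤ D) (hD1 : D ≤ 1)
    (hδ0 : 0 < δ) (hδ1 : δ ≤ 1) (hK0 : 0 < K) (hKδ : K ≤ δ/100)
    (hρ : ρ = δ/24)
    (hA'0 : 0 ≤ A') (hβ0 : 0 < β) (hβK : β ≤ K)
    (hs1 : A' + β ≤ 1) (ht0 : 0 ≤ t) (ht1 : t ≤ 1)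
    (hu1 : -ρ ≤ u) (hu2 : u ≤ 1+ρ) (hμ0 : 0 ≤ μ) (hμ1 : μ ≤ 1)
    (ex : (-3 + A + 2*K) + u*(5+D-A-2*K) = (-3 + (A'+β)) + μ*(1 - t - (A'+β)))
    (ey : (3 - 2*A - 4*K) + u*(-2+2*D+2*A+4*K) = (3 - 2*(A'+β)) + μ*(-4 - 2*t + 2*(A'+β))) :
    -δ < A' - A ∧ A' - A < δ := by
  have hρ0 : 0 < ρ := by rw [hρ]; linarith
  have hK1 : K ≤ 1/100 := by linarith
  have key : u*(8+4*D) = -(μ*(2+4*t)) := by linear_combination 2*ex + ey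
  have hu0 : u ≤ 0 := by nlinarith [mul_nonneg hμ0 (by linarith : (0:ℝ) ≤ 2+4*t)]
  have hμ6 : μ ≤ 6*ρ := by
    nlinarith [mul_nonneg hμ0 ht0, mul_nonneg (by linarith : (0:ℝ) ≤ ρ + u) (by linarith : (0:ℝ) ≤ 8+4*D)]
  have hW6 : 5+D-A-2*K ≤ 6 := by linarith
  have hW0 : (0:ℝ) ≤ 5+D-A-2*K := by linarith
  have h1 : u*(5+D-A-2*K) ≤ 0 := mul_nonpos_of_nonpos_of_nonneg hu0 hW0
  have h2 : -(6*ρ) ≤ u*(5+D-A-2*K) := by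
    nlinarith [mul_nonneg (by linarith : (0:ℝ) ≤ ρ + u) hW0, mul_nonneg hρ0.le (by linarith : (0:ℝ) ≤ 6 - (5+D-A-2*K))]
  have h3 : μ*(1 - t - (A'+β)) ≤ 6*ρ := by
    nlinarith [mul_nonneg hμ0 (by linarith : (0:ℝ) ≤ t + (A'+β))]
  have h4 : -(6*ρ) ≤ μ*(1 - t - (A'+β)) := by
    nlinarith [mul_nonneg hμ0 (by linarith : (0:ℝ) ≤ 2 - t - (A'+β))]
  constructor <;> nlinarith [ex]

set_option maxHeartbeats 1000000 in
private lemma right_neg (A D K ρ δ D' β S u ν : ℝ)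
    (hA0 : 0 ≤ A) (hA1 : A ≤ 1) (hD0 : 0 ≤ D) (hD1 : D ≤ 1)
    (hδ0 : 0 < δ) (hδ1 : δ ≤ 1) (hK0 : 0 < K) (hKδ : K ≤ δ/100)
    (hρ : ρ = δ/24)
    (hD'0 : 0 ≤ D') (hβ0 : 0 < β) (hβK : β ≤ K)
    (hT1 : D' + β ≤ 1) (hS0 : 0 ≤ S) (hS1 : S ≤ 1)
    (hu1 : -ρ ≤ u) (hu2 : u ≤ 1+ρ) (hν0 : 0 ≤ ν) (hν1 : ν ≤ 1)
    (ex : (-3 + A + 2*K) + u*(5+D-A-2*K) = (2 + (D'+β)) + ν*(1 - S - (D'+β)))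
    (ey : (3 - 2*A - 4*K) + u*(-2+2*D+2*A+4*K) = (1 + 2*(D'+β)) + ν*(-4 + 2*S - 2*(D'+β))) :
    -δ < D' - D ∧ D' - D < δ := by
  have hρ0 : 0 < ρ := by rw [hρ]; linarith
  have hK1 : K ≤ 1/100 := by linarith
  have key : (1-u)*(12-4*A-8*K) = ν*(4*S-6) := by linear_combination ey - 2*ex
  have hu0 : 1 ≤ u := by
    nlinarith [mul_nonneg hν0 (by linarith : (0:ℝ) ≤ 6-4*S)]
  have hν6 : ν ≤ 6*ρ := by
    nlinarith [mul_nonneg hν0 (by linarith : (0:ℝ) ≤ 6-4*S),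
      mul_nonneg (by linarith : (0:ℝ) ≤ 1 + ρ - u) (by linarith : (0:ℝ) ≤ 12-4*A-8*K)]
  have hW6 : 5+D-A-2*K ≤ 6 := by linarith
  have hW0 : (0:ℝ) ≤ 5+D-A-2*K := by linarith
  have h1 : 0 ≤ (u-1)*(5+D-A-2*K) := mul_nonneg (by linarith) hW0
  have h2 : (u-1)*(5+D-A-2*K) ≤ 6*ρ := by
    nlinarith [mul_nonneg (by linarith : (0:ℝ) ≤ 1 + ρ - u) hW0,
      mul_nonneg hρ0.le (by linarith : (0:ℝ) ≤ 6 - (5+D-A-2*K))]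
  have h3 : ν*(1 - S - (D'+β)) ≤ 6*ρ := by
    nlinarith [mul_nonneg hν0 (by linarith : (0:ℝ) ≤ S + (D'+β))]
  have h4 : -(6*ρ) ≤ ν*(1 - S - (D'+β)) := by
    nlinarith [mul_nonneg hν0 (by linarith : (0:ℝ) ≤ 2 - S - (D'+β))]
  have hx : (D'+β) - D = (u-1)*(5+D-A-2*K) - ν*(1 - S - (D'+β)) := by linear_combination -ex
  constructor <;> nlinarith [hx]

private lemma mem_seg_iff (p q z : ℝ × ℝ) :
    z ∈ segment ℝ p q ↔ ∃ μ : ℝ, 0 ≤ μ ∧ μ ≤ 1 ∧ z.1 = p.1 + μ * (q.1 - p.1) ∧ z.2 = p.2 + μ * (q.2 - p.2) := by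
  rw [segment_eq_image']
  constructor
  · rintro ⟨μ, ⟨h0, h1⟩, rfl⟩
    exact ⟨μ, h0, h1, by simp, by simp⟩
  · rintro ⟨μ, h0, h1, hx, hy⟩
    exact ⟨μ, ⟨h0, h1⟩, by ext <;> simp [hx, hy]⟩

noncomputable section

/-- The point on the segment `v₁v₂` (with `v₁ = (−3,3)`, `v₂ = (−2,1)`) at relative
position `(a−1)/k + b/(τk²)` from `v₁`. -/
def pAB (τ : ℝ) (k a b : ℕ) : ℝ × ℝ :=
  ((-3 : ℝ), (3 : ℝ)) +
    (((a : ℝ) - 1) / k + (b : ℝ) / (τ * (k : ℝ) ^ 2)) •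
      (((-2 : ℝ), (1 : ℝ)) - ((-3 : ℝ), (3 : ℝ)))

/-- The point on the segment `v₃v₄` (with `v₃ = (−2,−1)`, `v₄ = (−3,−3)`) at relative
position `(b−1)/k + a/(τk²)` from `v₃`. -/
def pBA (τ : ℝ) (k b a : ℕ) : ℝ × ℝ :=
  ((-2 : ℝ), (-1 : ℝ)) +
    (((b : ℝ) - 1) / k + (a : ℝ) / (τ * (k : ℝ) ^ 2)) •
      (((-3 : ℝ), (-3 : ℝ)) - ((-2 : ℝ), (-1 : ℝ)))

/-- The left segment `t_AB(a,b)` from `p_AB(a,b)` to `p_BA(b,a)`. -/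
def tAB (τ : ℝ) (k a b : ℕ) : Set (ℝ × ℝ) := segment ℝ (pAB τ k a b) (pBA τ k b a)

/-- The right segment `t_CD(c,d) = −t_AB(c,d)`, the reflection through the origin. -/
def tCD (τ : ℝ) (k c d : ℕ) : Set (ℝ × ℝ) := (fun z : ℝ × ℝ => -z) '' tAB τ k c d

set_option maxHeartbeats 4000000

/-- the crossing-segment lemma. There is `τ₀ ≥ 2` such that for all
`τ ≥ τ₀`, `k ≥ 1` and `(a,d) ∈ {1,…,k}²`, there is a closed segment `h` intersecting
`t_AB(a',b)` iff `a' = a`, and intersecting `t_CD(c,d')` iff `d' = d`. -/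
theorem stmt_15 :
    ∃ τ₀ : ℝ, 2 ≤ τ₀ ∧ ∀ τ : ℝ, τ₀ ≤ τ → ∀ k : ℕ, 1 ≤ k →
      ∀ a ∈ Finset.Icc 1 k, ∀ d ∈ Finset.Icc 1 k,
        ∃ e₁ e₂ : ℝ × ℝ,
          (∀ a' ∈ Finset.Icc 1 k, ∀ b ∈ Finset.Icc 1 k,
            ((segment ℝ e₁ e₂ ∩ tAB τ k a' b).Nonempty ↔ a' = a)) ∧
          (∀ c ∈ Finset.Icc 1 k, ∀ d' ∈ Finset.Icc 1 k,
            ((segment ℝ e₁ e₂ ∩ tCD τ k c d').Nonempty ↔ d' = d)) := by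
  refine ⟨100, by norm_num, ?_⟩
  intro τ hτ k hk a ha d hd
  rw [Finset.mem_Icc] at ha hd
  have hk1 : (1:ℝ) ≤ (k:ℝ) := by exact_mod_cast hk
  have hk0 : (0:ℝ) < (k:ℝ) := by linarith
  have hτ0 : (0:ℝ) < τ := by linarith
  set A : ℝ := ((a:ℝ)-1)/(k:ℝ) with hAdef
  set D : ℝ := ((d:ℝ)-1)/(k:ℝ) with hDdef
  set K : ℝ := 1/(τ*(k:ℝ)) with hKdef
  set δ : ℝ := 1/(k:ℝ) with hδdef
  set ρ : ℝ := δ/24 with hρdef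
  have hδ0 : 0 < δ := by rw [hδdef]; positivity
  have hδ1 : δ ≤ 1 := by rw [hδdef]; exact (div_le_one hk0).2 hk1
  have hK0 : 0 < K := by rw [hKdef]; positivity
  have hKδ : K ≤ δ/100 := by
    rw [hKdef, hδdef, div_div]
    exact one_div_le_one_div_of_le (by positivity) (by nlinarith)
  have hK1 : K ≤ 1/100 := by linarith
  have hKδ' : K ≤ δ := by linarith
  have hρ0 : 0 < ρ := by rw [hρdef]; linarith
  have hρ2 : 2*K ≤ ρ := by rw [hρdef]; linarith
  have hρ1 : ρ ≤ 1 := by rw [hρdef]; linarith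
  have hfrac : ∀ m : ℕ, 1 ≤ m → m ≤ k → 0 ≤ ((m:ℝ)-1)/(k:ℝ) ∧ ((m:ℝ)-1)/(k:ℝ) ≤ 1 - δ := by
    intro m h1 h2
    have hm1 : (1:ℝ) ≤ (m:ℝ) := by exact_mod_cast h1
    have hmk : (m:ℝ) ≤ (k:ℝ) := by exact_mod_cast h2
    constructor
    · exact div_nonneg (by linarith) hk0.le
    · rw [hδdef]
      rw [div_le_iff₀ hk0, sub_mul, one_mul, div_mul_cancel₀ _ hk0.ne']
      linarith
  have hβfact : ∀ m : ℕ, 1 ≤ m → m ≤ k → 0 < (m:ℝ)/(τ*(k:ℝ)^2) ∧ (m:ℝ)/(τ*(k:ℝ)^2) ≤ K := by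
    intro m h1 h2
    have hm1 : (1:ℝ) ≤ (m:ℝ) := by exact_mod_cast h1
    have hmk : (m:ℝ) ≤ (k:ℝ) := by exact_mod_cast h2
    constructor
    · exact div_pos (by linarith) (by positivity)
    · rw [hKdef, div_le_div_iff₀ (by positivity) (by positivity)]
      nlinarith [mul_le_mul_of_nonneg_left hmk (by positivity : (0:ℝ) ≤ τ*(k:ℝ))]
  obtain ⟨hA0, hA1'⟩ := hfrac a ha.1 ha.2
  obtain ⟨hD0, hD1'⟩ := hfrac d hd.1 hd.2
  rw [← hAdef] at hA0 hA1'
  rw [← hDdef] at hD0 hD1'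
  have hA1 : A ≤ 1 := by linarith
  have hD1 : D ≤ 1 := by linarith
  have hnateq : ∀ m n : ℕ,
      -δ < ((m:ℝ)-1)/(k:ℝ) - ((n:ℝ)-1)/(k:ℝ) → ((m:ℝ)-1)/(k:ℝ) - ((n:ℝ)-1)/(k:ℝ) < δ → m = n := by
    intro m n h1 h2
    have e : ((m:ℝ)-1)/(k:ℝ) - ((n:ℝ)-1)/(k:ℝ) = ((m:ℝ)-(n:ℝ))*(1/(k:ℝ)) := by ring
    rw [e, hδdef] at h1 h2
    have hpos : (0:ℝ) < 1/(k:ℝ) := by positivity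
    have hx : (m:ℝ) - n < 1 := by
      have := (mul_lt_mul_iff_of_pos_right hpos).1 (by linarith : ((m:ℝ)-(n:ℝ))*(1/(k:ℝ)) < 1*(1/(k:ℝ)))
      linarith
    have hy : (n:ℝ) - m < 1 := by
      have := (mul_lt_mul_iff_of_pos_right hpos).1 (by linarith : ((n:ℝ)-(m:ℝ))*(1/(k:ℝ)) < 1*(1/(k:ℝ)))
      linarith
    have hmn : (m:ℝ) < (n:ℝ) + 1 := by linarith
    have hnm : (n:ℝ) < (m:ℝ) + 1 := by linarith
    have h5 : m < n + 1 := by exact_mod_cast hmn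
    have h6 : n < m + 1 := by exact_mod_cast hnm
    omega
  have hpAB : ∀ (a' b : ℕ), pAB τ k a' b = (-3 + (((a':ℝ)-1)/(k:ℝ) + (b:ℝ)/(τ*(k:ℝ)^2)),
      3 - 2*(((a':ℝ)-1)/(k:ℝ) + (b:ℝ)/(τ*(k:ℝ)^2))) := by
    intro a' b
    unfold pAB
    rw [Prod.ext_iff]
    constructor <;> simp [Prod.fst_add, Prod.snd_add, Prod.fst_sub, Prod.snd_sub,
      Prod.smul_fst, Prod.smul_snd, smul_eq_mul] <;> ring
  have hpBA : ∀ (b a' : ℕ), pBA τ k b a' = (-2 - (((b:ℝ)-1)/(k:ℝ) + (a':ℝ)/(τ*(k:ℝ)^2)),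
      -1 - 2*(((b:ℝ)-1)/(k:ℝ) + (a':ℝ)/(τ*(k:ℝ)^2))) := by
    intro b a'
    unfold pBA
    rw [Prod.ext_iff]
    constructor <;> simp [Prod.fst_add, Prod.snd_add, Prod.fst_sub, Prod.snd_sub,
      Prod.smul_fst, Prod.smul_snd, smul_eq_mul] <;> ring
  have htab : ∀ (a' b : ℕ) (z : ℝ × ℝ), z ∈ tAB τ k a' b ↔ ∃ μ : ℝ, 0 ≤ μ ∧ μ ≤ 1 ∧
      z.1 = (-3 + (((a':ℝ)-1)/(k:ℝ) + (b:ℝ)/(τ*(k:ℝ)^2)))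
        + μ*(1 - (((b:ℝ)-1)/(k:ℝ) + (a':ℝ)/(τ*(k:ℝ)^2)) - (((a':ℝ)-1)/(k:ℝ) + (b:ℝ)/(τ*(k:ℝ)^2))) ∧
      z.2 = (3 - 2*(((a':ℝ)-1)/(k:ℝ) + (b:ℝ)/(τ*(k:ℝ)^2)))
        + μ*(-4 - 2*(((b:ℝ)-1)/(k:ℝ) + (a':ℝ)/(τ*(k:ℝ)^2)) + 2*(((a':ℝ)-1)/(k:ℝ) + (b:ℝ)/(τ*(k:ℝ)^2))) := by
    intro a' b z
    unfold tAB
    rw [hpAB, hpBA, mem_seg_iff]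
    dsimp only
    constructor <;> rintro ⟨μ, h0, h1, hx, hy⟩ <;>
      exact ⟨μ, h0, h1, by rw [hx]; ring, by rw [hy]; ring⟩
  have hseg : ∀ z : ℝ × ℝ, z ∈ segment ℝ
      (-3 + A + 2*K - ρ*(5+D-A-2*K), 3 - 2*A - 4*K - ρ*(-2+2*D+2*A+4*K))
      (-3 + A + 2*K + (1+ρ)*(5+D-A-2*K), 3 - 2*A - 4*K + (1+ρ)*(-2+2*D+2*A+4*K)) ↔
      ∃ u : ℝ, -ρ ≤ u ∧ u ≤ 1+ρ ∧ z.1 = (-3 + A + 2*K) + u*(5+D-A-2*K) ∧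
        z.2 = (3 - 2*A - 4*K) + u*(-2+2*D+2*A+4*K) := by
    intro z
    rw [mem_seg_iff]
    dsimp only
    constructor
    · rintro ⟨v, hv0, hv1, hx, hy⟩
      refine ⟨-ρ + v*(1+2*ρ), by nlinarith, by nlinarith, by rw [hx]; ring, by rw [hy]; ring⟩
    · rintro ⟨u, h1, h2, hx, hy⟩
      have h12 : (0:ℝ) < 1 + 2*ρ := by linarith
      refine ⟨(u+ρ)/(1+2*ρ), div_nonneg (by linarith) h12.le, by rw [div_le_one h12]; linarith, ?_, ?_⟩
      · rw [hx]; field_simp; ring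
      · rw [hy]; field_simp; ring
  refine ⟨(-3 + A + 2*K - ρ*(5+D-A-2*K), 3 - 2*A - 4*K - ρ*(-2+2*D+2*A+4*K)),
      (-3 + A + 2*K + (1+ρ)*(5+D-A-2*K), 3 - 2*A - 4*K + (1+ρ)*(-2+2*D+2*A+4*K)), ?_, ?_⟩
  · -- left segments
    intro a' ha' b hb
    rw [Finset.mem_Icc] at ha' hb
    constructor
    · rintro ⟨z, hzseg, hztab⟩
      rw [hseg] at hzseg
      obtain ⟨u, hu1, hu2, hzx, hzy⟩ := hzseg
      rw [htab a' b] at hztab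
      obtain ⟨μ, hμ0, hμ1, hzx', hzy'⟩ := hztab
      have ex := hzx.symm.trans hzx'
      have ey := hzy.symm.trans hzy'
      obtain ⟨hb1, hb2⟩ := hβfact b hb.1 hb.2
      obtain ⟨ha'0, ha'1⟩ := hfrac a' ha'.1 ha'.2
      obtain ⟨hab0, hab1⟩ := hβfact a' ha'.1 ha'.2
      obtain ⟨hbb0, hbb1⟩ := hfrac b hb.1 hb.2
      have ht0 : 0 ≤ ((b:ℝ)-1)/(k:ℝ) + (a':ℝ)/(τ*(k:ℝ)^2) := add_nonneg hbb0 hab0.le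
      have ht1 : ((b:ℝ)-1)/(k:ℝ) + (a':ℝ)/(τ*(k:ℝ)^2) ≤ 1 := by linarith
      have hs1 : ((a':ℝ)-1)/(k:ℝ) + (b:ℝ)/(τ*(k:ℝ)^2) ≤ 1 := by linarith
      have hres := left_neg A D K ρ δ (((a':ℝ)-1)/(k:ℝ)) ((b:ℝ)/(τ*(k:ℝ)^2))
        (((b:ℝ)-1)/(k:ℝ) + (a':ℝ)/(τ*(k:ℝ)^2)) u μ hA0 hA1 hD0 hD1 hδ0 hδ1 hK0 hKδ hρdef
        ha'0 hb1 hb2 hs1 ht0 ht1 hu1 hu2 hμ0 hμ1 ex ey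
      rw [hAdef] at hres
      exact hnateq a' a hres.1 hres.2
    · rintro rfl
      obtain ⟨hb1, hb2⟩ := hβfact b hb.1 hb.2
      obtain ⟨hbb0, hbb1⟩ := hfrac b hb.1 hb.2
      obtain ⟨hab0, hab1⟩ := hβfact a' ha'.1 ha'.2
      have hsl : A ≤ A + (b:ℝ)/(τ*(k:ℝ)^2) := by linarith
      have hsu : A + (b:ℝ)/(τ*(k:ℝ)^2) ≤ A + K := by linarith
      have hs1 : A + (b:ℝ)/(τ*(k:ℝ)^2) ≤ 1 := by linarith [hA1']
      have hs0 : 0 ≤ A + (b:ℝ)/(τ*(k:ℝ)^2) := by linarith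
      have ht0 : 0 ≤ ((b:ℝ)-1)/(k:ℝ) + (a':ℝ)/(τ*(k:ℝ)^2) := add_nonneg hbb0 hab0.le
      have ht1 : ((b:ℝ)-1)/(k:ℝ) + (a':ℝ)/(τ*(k:ℝ)^2) ≤ 1 := by linarith
      obtain ⟨u, μ, hu1, hu2, hμ0, hμ1, ex, ey⟩ := left_pos A D K ρ
        (A + (b:ℝ)/(τ*(k:ℝ)^2)) (((b:ℝ)-1)/(k:ℝ) + (a':ℝ)/(τ*(k:ℝ)^2))
        hA0 hA1 hD0 hD1 hK0 hK1 hρ2 hρ1 hsl hsu hs1 hs0 ht0 ht1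
      refine ⟨((-3 + A + 2*K) + u*(5+D-A-2*K), (3 - 2*A - 4*K) + u*(-2+2*D+2*A+4*K)), ?_, ?_⟩
      · rw [hseg]
        exact ⟨u, hu1, hu2, rfl, rfl⟩
      · rw [htab a' b]
        refine ⟨μ, hμ0, hμ1, ?_, ?_⟩
        · dsimp only
          rw [← hAdef]
          exact ex
        · dsimp only
          rw [← hAdef]
          exact ey
  · -- right segments
    intro c hc d' hd'
    rw [Finset.mem_Icc] at hc hd'
    constructor
    · rintro ⟨z, hzseg, hzcd⟩
      rw [hseg] at hzseg
      obtain ⟨u, hu1, hu2, hzx, hzy⟩ := hzseg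
      obtain ⟨y, hy, hyz⟩ := hzcd
      rw [htab c d'] at hy
      obtain ⟨μ, hμ0, hμ1, hyx, hyy⟩ := hy
      have hz1 : z.1 = -y.1 := by rw [← hyz]; simp
      have hz2 : z.2 = -y.2 := by rw [← hyz]; simp
      have ex : (-3 + A + 2*K) + u*(5+D-A-2*K) =
          (2 + (((d':ℝ)-1)/(k:ℝ) + (c:ℝ)/(τ*(k:ℝ)^2)))
          + (1-μ)*(1 - (((c:ℝ)-1)/(k:ℝ) + (d':ℝ)/(τ*(k:ℝ)^2)) - (((d':ℝ)-1)/(k:ℝ) + (c:ℝ)/(τ*(k:ℝ)^2))) := by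
        linear_combination -hzx + hz1 - hyx
      have ey : (3 - 2*A - 4*K) + u*(-2+2*D+2*A+4*K) =
          (1 + 2*(((d':ℝ)-1)/(k:ℝ) + (c:ℝ)/(τ*(k:ℝ)^2)))
          + (1-μ)*(-4 + 2*(((c:ℝ)-1)/(k:ℝ) + (d':ℝ)/(τ*(k:ℝ)^2)) - 2*(((d':ℝ)-1)/(k:ℝ) + (c:ℝ)/(τ*(k:ℝ)^2))) := by
        linear_combination -hzy + hz2 - hyy
      obtain ⟨hc1, hc2⟩ := hβfact c hc.1 hc.2
      obtain ⟨hd'0, hd'1⟩ := hfrac d' hd'.1 hd'.2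
      obtain ⟨hdb0, hdb1⟩ := hβfact d' hd'.1 hd'.2
      obtain ⟨hcc0, hcc1⟩ := hfrac c hc.1 hc.2
      have hS0 : 0 ≤ ((c:ℝ)-1)/(k:ℝ) + (d':ℝ)/(τ*(k:ℝ)^2) := add_nonneg hcc0 hdb0.le
      have hS1 : ((c:ℝ)-1)/(k:ℝ) + (d':ℝ)/(τ*(k:ℝ)^2) ≤ 1 := by linarith
      have hT1 : ((d':ℝ)-1)/(k:ℝ) + (c:ℝ)/(τ*(k:ℝ)^2) ≤ 1 := by linarith
      have hres := right_neg A D K ρ δ (((d':ℝ)-1)/(k:ℝ)) ((c:ℝ)/(τ*(k:ℝ)^2))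
        (((c:ℝ)-1)/(k:ℝ) + (d':ℝ)/(τ*(k:ℝ)^2)) u (1-μ) hA0 hA1 hD0 hD1 hδ0 hδ1 hK0 hKδ hρdef
        hd'0 hc1 hc2 hT1 hS0 hS1 hu1 hu2 (by linarith) (by linarith) ex ey
      rw [hDdef] at hres
      exact hnateq d' d hres.1 hres.2
    · rintro rfl
      obtain ⟨hc1, hc2⟩ := hβfact c hc.1 hc.2
      obtain ⟨hcc0, hcc1⟩ := hfrac c hc.1 hc.2
      obtain ⟨hdb0, hdb1⟩ := hβfact d' hd'.1 hd'.2
      have hS0 : 0 ≤ ((c:ℝ)-1)/(k:ℝ) + (d':ℝ)/(τ*(k:ℝ)^2) := add_nonneg hcc0 hdb0.le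
      have hS1 : ((c:ℝ)-1)/(k:ℝ) + (d':ℝ)/(τ*(k:ℝ)^2) ≤ 1 := by linarith
      have hTl : D ≤ D + (c:ℝ)/(τ*(k:ℝ)^2) := by linarith
      have hTu : D + (c:ℝ)/(τ*(k:ℝ)^2) ≤ D + K := by linarith
      have hT1 : D + (c:ℝ)/(τ*(k:ℝ)^2) ≤ 1 := by linarith [hD1']
      have hT0 : 0 ≤ D + (c:ℝ)/(τ*(k:ℝ)^2) := by linarith
      obtain ⟨u, μ, hu1, hu2, hμ0, hμ1, ex, ey⟩ := right_pos A D K ρ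
        (((c:ℝ)-1)/(k:ℝ) + (d':ℝ)/(τ*(k:ℝ)^2)) (D + (c:ℝ)/(τ*(k:ℝ)^2))
        hA0 hA1 hD0 hD1 hK0 hK1 hρ2 hρ1 hTl hTu hT1 hT0 hS0 hS1
      refine ⟨((-3 + A + 2*K) + u*(5+D-A-2*K), (3 - 2*A - 4*K) + u*(-2+2*D+2*A+4*K)), ?_, ?_⟩
      · rw [hseg]
        exact ⟨u, hu1, hu2, rfl, rfl⟩
      · refine ⟨(-((-3 + A + 2*K) + u*(5+D-A-2*K)), -((3 - 2*A - 4*K) + u*(-2+2*D+2*A+4*K))), ?_, ?_⟩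
        · rw [htab c d']
          refine ⟨1-μ, by linarith, by linarith, ?_, ?_⟩
          · dsimp only
            rw [← hDdef]
            linear_combination -ex
          · dsimp only
            rw [← hDdef]
            linear_combination -ey
        · simp
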